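/- (Miller–Clifford) Let S be a semigroup and s, t, u ∈ S with s L t and t R u. Then the H-class of t is a group (i.e., a subgroup of S) if and only if s R su and su L u. -/

import Mathlib

/-- Green's quasi-order ≤_R : s ≤_R t iff sS¹ ⊆ tS¹, i.e. s ∈ tS¹. -/
def leR {S : Type*} [Semigroup S] (s t : S) : Prop := s = t ∨ ∃ x, s = t * x

/-- Green's quasi-order ≤_L : s ≤_L t iff S¹s ⊆ S¹t, i.e. s ∈ S¹t. -/
def leL {S : Type*} [Semigroup S] (s t : S) : Prop := s = t ∨ ∃ x, s = x * t

/-- Green's quasi-order ≤_J : s ≤_J t iff S¹sS¹ ⊆ S¹tS¹, i.e. s ∈ S¹tS¹. -/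
def leJ {S : Type*} [Semigroup S] (s t : S) : Prop :=
  s = t ∨ (∃ x, s = x * t) ∨ (∃ y, s = t * y) ∨ ∃ x y, s = x * t * y

/-- Green's equivalence R. -/
def eqR {S : Type*} [Semigroup S] (s t : S) : Prop := leR s t ∧ leR t s

/-- Green's equivalence L. -/
def eqL {S : Type*} [Semigroup S] (s t : S) : Prop := leL s t ∧ leL t s

/-- Green's equivalence J. -/
def eqJ {S : Type*} [Semigroup S] (s t : S) : Prop := leJ s t ∧ leJ t s

lemma leR_iff {S : Type*} [Semigroup S] (s t : S) :
    leR s t ↔ ∃ x : WithOne S, (s : WithOne S) = t * x := by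
  constructor
  · rintro (rfl | ⟨x, rfl⟩)
    · exact ⟨1, (mul_one _).symm⟩
    · exact ⟨x, by rw [WithOne.coe_mul]⟩
  · rintro ⟨x, hx⟩
    induction x using WithOne.recOneCoe with
    | one => exact Or.inl (WithOne.coe_inj.mp (by simpa using hx))
    | coe a => exact Or.inr ⟨a, WithOne.coe_inj.mp (by rw [WithOne.coe_mul]; exact hx)⟩

lemma leL_iff {S : Type*} [Semigroup S] (s t : S) :
    leL s t ↔ ∃ x : WithOne S, (s : WithOne S) = x * t := by
  constructor
  · rintro (rfl | ⟨x, rfl⟩)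
    · exact ⟨1, (one_mul _).symm⟩
    · exact ⟨x, by rw [WithOne.coe_mul]⟩
  · rintro ⟨x, hx⟩
    induction x using WithOne.recOneCoe with
    | one => exact Or.inl (WithOne.coe_inj.mp (by simpa using hx))
    | coe a => exact Or.inr ⟨a, WithOne.coe_inj.mp (by rw [WithOne.coe_mul]; exact hx)⟩

/-- Miller–Clifford: if s L t and t R u, then the H-class of t
is a group (i.e. contains an idempotent) if and only if s R su and su L u. -/
theorem stmt_4 {S : Type*} [Semigroup S] (s t u : S)
    (hst : eqL s t) (htu : eqR t u) :
    (∃ e : S, eqR e t ∧ eqL e t ∧ e * e = e) ↔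
      (eqR s (s * u) ∧ eqL (s * u) u) := by
  obtain ⟨hst1, hst2⟩ := hst
  obtain ⟨htu1, htu2⟩ := htu
  rw [leL_iff] at hst1 hst2
  rw [leR_iff] at htu1 htu2
  obtain ⟨a, ha⟩ := hst1   -- ↑s = a * ↑t
  obtain ⟨b, hb⟩ := hst2   -- ↑t = b * ↑s
  obtain ⟨c, hc⟩ := htu1   -- ↑t = ↑u * c
  obtain ⟨d, hd⟩ := htu2   -- ↑u = ↑t * d
  constructor
  · rintro ⟨e, ⟨heR1, heR2⟩, ⟨heL1, heL2⟩, hee⟩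
    rw [leR_iff] at heR1 heR2
    rw [leL_iff] at heL1 heL2
    obtain ⟨p, hp⟩ := heR1  -- ↑e = ↑t * p
    obtain ⟨q, hq⟩ := heR2  -- ↑t = ↑e * q
    obtain ⟨r, hr⟩ := heL1  -- ↑e = r * ↑t
    obtain ⟨z, hz⟩ := heL2  -- ↑t = z * ↑e
    have hee' : (e : WithOne S) * e = e := by rw [← WithOne.coe_mul, hee]
    have hs' : (s : WithOne S) = (a * z) * e := by rw [ha, hz, mul_assoc]
    have hse : (s : WithOne S) * e = s := by rw [hs', mul_assoc, hee']
    have hu' : (u : WithOne S) = e * (q * d) := by rw [hd, hq, mul_assoc]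
    have heu : (e : WithOne S) * u = u := by rw [hu', ← mul_assoc, hee']
    constructor
    · refine ⟨?_, Or.inr ⟨u, rfl⟩⟩
      rw [leR_iff]
      refine ⟨c * p, ?_⟩
      rw [WithOne.coe_mul, mul_assoc, ← mul_assoc (u : WithOne S) c p, ← hc, ← hp, hse]
    · refine ⟨Or.inr ⟨s, rfl⟩, ?_⟩
      rw [leL_iff]
      refine ⟨r * b, ?_⟩
      rw [WithOne.coe_mul, ← mul_assoc, mul_assoc r b (s : WithOne S), ← hb, ← hr, heu]
  · rintro ⟨⟨hsu1, _⟩, ⟨_, hsu4⟩⟩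
    rw [leR_iff] at hsu1
    rw [leL_iff] at hsu4
    obtain ⟨w, hw⟩ := hsu1  -- ↑s = ↑s * ↑u * w
    obtain ⟨v, hv⟩ := hsu4  -- ↑u = v * (↑s * ↑u)
    rw [WithOne.coe_mul] at hw hv
    have key : (u : WithOne S) * w = v * s := by rw [hv, mul_assoc, ← hw]
    have hsE : (s : WithOne S) * (u * w) = s := by rw [← mul_assoc, ← hw]
    have hEu : v * (s : WithOne S) * u = u := by rw [mul_assoc, ← hv]
    have hEE : ((u : WithOne S) * w) * (u * w) = u * w := by
      nth_rewrite 1 [key]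
      rw [mul_assoc, hsE, key]
    have hex : ∃ e : S, (e : WithOne S) = u * w := by
      induction w using WithOne.recOneCoe with
      | one => exact ⟨u, by simp⟩
      | coe x => exact ⟨u * x, by rw [WithOne.coe_mul]⟩
    obtain ⟨e, he⟩ := hex
    have heu : (e : WithOne S) * u = u := by rw [he, key, hEu]
    have hse : (s : WithOne S) * e = s := by rw [he, hsE]
    refine ⟨e, ⟨?_, ?_⟩, ⟨?_, ?_⟩, ?_⟩
    · rw [leR_iff]
      exact ⟨d * w, by rw [he, hd, mul_assoc]⟩
    · rw [leR_iff]
      exact ⟨(u : WithOne S) * c, by rw [← mul_assoc, heu, ← hc]⟩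
    · rw [leL_iff]
      exact ⟨v * a, by rw [he, key, ha, mul_assoc]⟩
    · rw [leL_iff]
      exact ⟨b * (s : WithOne S), by rw [mul_assoc, hse, ← hb]⟩
    · rw [← he] at hEE
      exact_mod_cast hEE
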